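/- Let A, X ∈ ℂ^{m×n}, let α ∈ ℂ with |α| = 1, and let P and Q be complex permutation matrices of compatible sizes. Then the misfit is invariant in each of the following three cases: (i) J(α P X Q; α P A Q) = J(X;A) with P ∈ ℂ^{m×m}, Q ∈ ℂ^{n×n}; (ii) J(α P X* Q; α P A* Q) = J(X;A) with P ∈ ℂ^{n×n}, Q ∈ ℂ^{m×m}; (iii) J(α P Xᵀ Q; α P Aᵀ Q) = J(X;A) with P ∈ ℂ^{n×n}, Q ∈ ℂ^{m×m}. -/
import Mathlib


open scoped Matrix

/-- `B` is the Moore–Penrose pseudoinverse of `A`. -/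
def IsMPInv {m n : ℕ} (A : Matrix (Fin m) (Fin n) ℂ) (B : Matrix (Fin n) (Fin m) ℂ) : Prop :=
  A * B * A = A ∧ B * A * B = B ∧ (A * B)ᴴ = A * B ∧ (B * A)ᴴ = B * A

/-- A complex permutation matrix: exactly one nonzero entry in each row and column,
each of modulus 1. -/
def IsComplexPerm {k : ℕ} (P : Matrix (Fin k) (Fin k) ℂ) : Prop :=
  ∃ (π : Equiv.Perm (Fin k)) (d : Fin k → ℂ),
    (∀ i, ‖d i‖ = 1) ∧ P = Matrix.of fun i j => if j = π i then d i else 0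

/-- Squared Frobenius norm. -/
noncomputable def frobSq {m n : ℕ} (M : Matrix (Fin m) (Fin n) ℂ) : ℝ :=
  ∑ i, ∑ j, ‖M i j‖ ^ 2

/-- The misfit functional `J(X;A) = ½‖(X-A)A†‖_F² + ½‖A†(X-A)‖_F²`,
with the pseudoinverse `Ad` of `A` given explicitly. -/
noncomputable def Jmis {m n : ℕ} (X A : Matrix (Fin m) (Fin n) ℂ)
    (Ad : Matrix (Fin n) (Fin m) ℂ) : ℝ :=
  (1 / 2) * frobSq ((X - A) * Ad) + (1 / 2) * frobSq (Ad * (X - A))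

/- ### Auxiliary lemmas -/

lemma complexPerm_unitary {k : ℕ} {P : Matrix (Fin k) (Fin k) ℂ} (h : IsComplexPerm P) :
    Pᴴ * P = 1 ∧ P * Pᴴ = 1 := by
  obtain ⟨π, d, hd, rfl⟩ := h
  have hd2 : ∀ i, d i * (starRingEnd ℂ) (d i) = 1 := by
    intro i
    rw [Complex.mul_conj', hd i]; norm_num
  constructor
  · ext i j
    simp only [Matrix.mul_apply, Matrix.conjTranspose_apply, Matrix.of_apply, Matrix.one_apply,
      apply_ite (star : ℂ → ℂ), star_zero]
    rw [Finset.sum_eq_single (π.symm i)]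
    · by_cases hij : i = j
      · subst hij
        simp [Equiv.apply_symm_apply, mul_comm, hd2]
      · simp only [Equiv.apply_symm_apply, if_pos rfl]
        rw [if_neg (fun h' : j = i => hij h'.symm), if_neg hij, mul_zero]
    · intro b _ hb
      have : i ≠ π b := fun h' => hb (by simp [h'])
      simp [this]
    · simp
  · ext i j
    simp only [Matrix.mul_apply, Matrix.conjTranspose_apply, Matrix.of_apply, Matrix.one_apply,
      apply_ite (star : ℂ → ℂ), star_zero]
    rw [Finset.sum_eq_single (π i)]
    · by_cases hij : i = j
      · subst hij; simp [hd2]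
      · have : π i ≠ π j := fun h' => hij (π.injective h')
        simp [hij, this]
    · intro b _ hb; simp [hb]
    · simp

/-- Uniqueness of the Moore–Penrose pseudoinverse. -/
lemma mp_unique {m n : ℕ} {A : Matrix (Fin m) (Fin n) ℂ} {B C : Matrix (Fin n) (Fin m) ℂ}
    (hB : IsMPInv A B) (hC : IsMPInv A C) : B = C := by
  obtain ⟨b1, b2, b3, b4⟩ := hB
  obtain ⟨c1, c2, c3, c4⟩ := hC
  have e1 : A * B = A * C := by
    calc A * B = (A * B)ᴴ := b3.symm
      _ = Bᴴ * Aᴴ := Matrix.conjTranspose_mul _ _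
      _ = Bᴴ * (A * C * A)ᴴ := by rw [c1]
      _ = Bᴴ * (Aᴴ * (A * C)ᴴ) := by
            rw [Matrix.conjTranspose_mul]
      _ = (Bᴴ * Aᴴ) * (A * C) := by rw [← Matrix.mul_assoc, c3]
      _ = (A * B)ᴴ * (A * C) := by rw [Matrix.conjTranspose_mul]
      _ = (A * B) * (A * C) := by rw [b3]
      _ = (A * B * A) * C := by simp only [Matrix.mul_assoc]
      _ = A * C := by rw [b1]
  have e2 : B * A = C * A := by
    calc B * A = (B * A)ᴴ := b4.symm
      _ = Aᴴ * Bᴴ := Matrix.conjTranspose_mul _ _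
      _ = (A * (C * A))ᴴ * Bᴴ := by rw [← Matrix.mul_assoc, c1]
      _ = (C * A)ᴴ * Aᴴ * Bᴴ := by rw [Matrix.conjTranspose_mul]
      _ = (C * A) * (Aᴴ * Bᴴ) := by rw [c4, Matrix.mul_assoc]
      _ = (C * A) * (B * A)ᴴ := by rw [Matrix.conjTranspose_mul]
      _ = C * (A * (B * A)) := by rw [b4]; simp only [Matrix.mul_assoc]
      _ = C * A := by rw [show A * (B * A) = A * B * A from by simp only [Matrix.mul_assoc], b1]
  calc B = B * A * B := b2.symm
    _ = C * A * B := by rw [e2]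
    _ = C * (A * C) := by rw [Matrix.mul_assoc, e1]
    _ = C := by rw [← Matrix.mul_assoc, c2]

lemma frobSq_eq_trace {m n : ℕ} (M : Matrix (Fin m) (Fin n) ℂ) :
    frobSq M = (Matrix.trace (Mᴴ * M)).re := by
  simp only [frobSq, Matrix.trace, Matrix.diag_apply, Matrix.mul_apply,
    Matrix.conjTranspose_apply, Complex.re_sum]
  rw [Finset.sum_comm]
  refine Finset.sum_congr rfl fun i _ => Finset.sum_congr rfl fun j _ => ?_
  rw [show star (M j i) = (starRingEnd ℂ) (M j i) from rfl, mul_comm, Complex.mul_conj']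
  norm_cast

lemma frobSq_unit_left {m n k : ℕ} (M : Matrix (Fin m) (Fin n) ℂ)
    (P : Matrix (Fin k) (Fin m) ℂ) (h : Pᴴ * P = 1) : frobSq (P * M) = frobSq M := by
  rw [frobSq_eq_trace, frobSq_eq_trace, Matrix.conjTranspose_mul]
  congr 2
  calc Mᴴ * Pᴴ * (P * M) = Mᴴ * (Pᴴ * P) * M := by simp only [Matrix.mul_assoc]
    _ = Mᴴ * M := by rw [h, Matrix.mul_one]

lemma frobSq_unit_right {m n k : ℕ} (M : Matrix (Fin m) (Fin n) ℂ)
    (Q : Matrix (Fin n) (Fin k) ℂ) (h : Q * Qᴴ = 1) : frobSq (M * Q) = frobSq M := by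
  rw [frobSq_eq_trace, frobSq_eq_trace, Matrix.conjTranspose_mul]
  congr 1
  calc Matrix.trace (Qᴴ * Mᴴ * (M * Q)) = Matrix.trace ((Qᴴ * (Mᴴ * M)) * Q) := by
        simp only [Matrix.mul_assoc]
    _ = Matrix.trace (Q * (Qᴴ * (Mᴴ * M))) := Matrix.trace_mul_comm _ _
    _ = Matrix.trace ((Q * Qᴴ) * (Mᴴ * M)) := by rw [Matrix.mul_assoc]
    _ = Matrix.trace (Mᴴ * M) := by rw [h, Matrix.one_mul]

lemma frobSq_smul {m n : ℕ} (M : Matrix (Fin m) (Fin n) ℂ) (c : ℂ) (hc : ‖c‖ = 1) :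
    frobSq (c • M) = frobSq M := by
  simp [frobSq, norm_smul, hc, mul_pow]

lemma frobSq_conjTranspose {m n : ℕ} (M : Matrix (Fin m) (Fin n) ℂ) :
    frobSq Mᴴ = frobSq M := by
  unfold frobSq
  rw [Finset.sum_comm]
  simp [Matrix.conjTranspose_apply]

lemma frobSq_transpose {m n : ℕ} (M : Matrix (Fin m) (Fin n) ℂ) :
    frobSq Mᵀ = frobSq M := by
  unfold frobSq
  rw [Finset.sum_comm]
  simp [Matrix.transpose_apply]

lemma mp_conjTranspose {m n : ℕ} {A : Matrix (Fin m) (Fin n) ℂ} {B : Matrix (Fin n) (Fin m) ℂ}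
    (h : IsMPInv A B) : IsMPInv Aᴴ Bᴴ := by
  obtain ⟨h1, h2, h3, h4⟩ := h
  refine ⟨?_, ?_, ?_, ?_⟩
  · rw [← Matrix.conjTranspose_mul, ← Matrix.conjTranspose_mul]
    simp only [← Matrix.mul_assoc] at *
    rw [h1]
  · rw [← Matrix.conjTranspose_mul, ← Matrix.conjTranspose_mul]
    simp only [← Matrix.mul_assoc] at *
    rw [h2]
  · rw [← Matrix.conjTranspose_mul, h4]; exact h4
  · rw [← Matrix.conjTranspose_mul, h3]; exact h3

lemma conjTranspose_transpose' {m n : ℕ} (M : Matrix (Fin m) (Fin n) ℂ) : Mᵀᴴ = Mᴴᵀ := by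
  ext i j; simp

lemma mp_transpose {m n : ℕ} {A : Matrix (Fin m) (Fin n) ℂ} {B : Matrix (Fin n) (Fin m) ℂ}
    (h : IsMPInv A B) : IsMPInv Aᵀ Bᵀ := by
  obtain ⟨h1, h2, h3, h4⟩ := h
  refine ⟨?_, ?_, ?_, ?_⟩
  · rw [← Matrix.transpose_mul, ← Matrix.transpose_mul]
    simp only [← Matrix.mul_assoc] at *
    rw [h1]
  · rw [← Matrix.transpose_mul, ← Matrix.transpose_mul]
    simp only [← Matrix.mul_assoc] at *
    rw [h2]
  · rw [← Matrix.transpose_mul, conjTranspose_transpose', h4]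
  · rw [← Matrix.transpose_mul, conjTranspose_transpose', h3]

lemma mul_cancel_left' {k p : ℕ} {U V : Matrix (Fin k) (Fin k) ℂ} (h : U * V = 1)
    (Z : Matrix (Fin k) (Fin p) ℂ) : U * (V * Z) = Z := by
  rw [← Matrix.mul_assoc, h, Matrix.one_mul]

lemma mp_transform {m n : ℕ} {A : Matrix (Fin m) (Fin n) ℂ} {B : Matrix (Fin n) (Fin m) ℂ}
    (h : IsMPInv A B) (α : ℂ) (hα : ‖α‖ = 1)
    (P : Matrix (Fin m) (Fin m) ℂ) (Q : Matrix (Fin n) (Fin n) ℂ)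
    (hP : Pᴴ * P = 1 ∧ P * Pᴴ = 1) (hQ : Qᴴ * Q = 1 ∧ Q * Qᴴ = 1) :
    IsMPInv (α • (P * A * Q)) ((starRingEnd ℂ α) • (Qᴴ * B * Pᴴ)) := by
  obtain ⟨h1, h2, h3, h4⟩ := h
  have hαα : α * (starRingEnd ℂ) α = 1 := by
    rw [Complex.mul_conj', hα]; norm_num
  have hαα' : (starRingEnd ℂ) α * α = 1 := by rw [mul_comm]; exact hαα
  have cP : ∀ {p : ℕ} (Z : Matrix (Fin m) (Fin p) ℂ), Pᴴ * (P * Z) = Z := fun Z => by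
    rw [← Matrix.mul_assoc, hP.1, Matrix.one_mul]
  have cP' : ∀ {p : ℕ} (Z : Matrix (Fin m) (Fin p) ℂ), P * (Pᴴ * Z) = Z := fun Z => by
    rw [← Matrix.mul_assoc, hP.2, Matrix.one_mul]
  have cQ : ∀ {p : ℕ} (Z : Matrix (Fin n) (Fin p) ℂ), Qᴴ * (Q * Z) = Z := fun Z => by
    rw [← Matrix.mul_assoc, hQ.1, Matrix.one_mul]
  have cQ' : ∀ {p : ℕ} (Z : Matrix (Fin n) (Fin p) ℂ), Q * (Qᴴ * Z) = Z := fun Z => by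
    rw [← Matrix.mul_assoc, hQ.2, Matrix.one_mul]
  have hABAZ : ∀ {p : ℕ} (Z : Matrix (Fin n) (Fin p) ℂ), A * (B * (A * Z)) = A * Z := fun Z => by
    simp only [← Matrix.mul_assoc, h1]
  have hBABZ : ∀ {p : ℕ} (Z : Matrix (Fin m) (Fin p) ℂ), B * (A * (B * Z)) = B * Z := fun Z => by
    simp only [← Matrix.mul_assoc, h2]
  have key1 : (α • (P * A * Q)) * ((starRingEnd ℂ α) • (Qᴴ * B * Pᴴ)) = P * (A * B) * Pᴴ := by
    rw [Matrix.smul_mul, Matrix.mul_smul, smul_smul, hαα, one_smul]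
    simp only [Matrix.mul_assoc, cQ']
  have key2 : ((starRingEnd ℂ α) • (Qᴴ * B * Pᴴ)) * (α • (P * A * Q)) = Qᴴ * (B * A) * Q := by
    rw [Matrix.smul_mul, Matrix.mul_smul, smul_smul, hαα', one_smul]
    simp only [Matrix.mul_assoc, cP]
  refine ⟨?_, ?_, ?_, ?_⟩
  · rw [key1, Matrix.mul_smul]
    congr 1
    simp only [Matrix.mul_assoc, cP, hABAZ]
  · rw [key2, Matrix.mul_smul]
    congr 1
    simp only [Matrix.mul_assoc, cQ', hBABZ]
  · rw [key1, Matrix.conjTranspose_mul, Matrix.conjTranspose_mul,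
      Matrix.conjTranspose_conjTranspose, h3]
    simp only [Matrix.mul_assoc]
  · rw [key2, Matrix.conjTranspose_mul, Matrix.conjTranspose_mul,
      Matrix.conjTranspose_conjTranspose, h4]
    simp only [Matrix.mul_assoc]

theorem stmt15 {m n : ℕ} (A X : Matrix (Fin m) (Fin n) ℂ) (Ad : Matrix (Fin n) (Fin m) ℂ)
    (hMP : IsMPInv A Ad) (α : ℂ) (hα : ‖α‖ = 1) :
    (∀ (P : Matrix (Fin m) (Fin m) ℂ) (Q : Matrix (Fin n) (Fin n) ℂ),
      IsComplexPerm P → IsComplexPerm Q →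
      ∀ B : Matrix (Fin n) (Fin m) ℂ, IsMPInv (α • (P * A * Q)) B →
        Jmis (α • (P * X * Q)) (α • (P * A * Q)) B = Jmis X A Ad) ∧
    (∀ (P : Matrix (Fin n) (Fin n) ℂ) (Q : Matrix (Fin m) (Fin m) ℂ),
      IsComplexPerm P → IsComplexPerm Q →
      ∀ B : Matrix (Fin m) (Fin n) ℂ, IsMPInv (α • (P * Aᴴ * Q)) B →
        Jmis (α • (P * Xᴴ * Q)) (α • (P * Aᴴ * Q)) B = Jmis X A Ad) ∧
    (∀ (P : Matrix (Fin n) (Fin n) ℂ) (Q : Matrix (Fin m) (Fin m) ℂ),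
      IsComplexPerm P → IsComplexPerm Q →
      ∀ B : Matrix (Fin m) (Fin n) ℂ, IsMPInv (α • (P * Aᵀ * Q)) B →
        Jmis (α • (P * Xᵀ * Q)) (α • (P * Aᵀ * Q)) B = Jmis X A Ad) := by
  have hαα : α * (starRingEnd ℂ) α = 1 := by
    rw [Complex.mul_conj', hα]; norm_num
  have hαα' : (starRingEnd ℂ) α * α = 1 := by rw [mul_comm]; exact hαα
  refine ⟨?_, ?_, ?_⟩
  · intro P Q hP hQ B hB
    have hPu := complexPerm_unitary hP
    have hQu := complexPerm_unitary hQ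
    have hB' := mp_transform hMP α hα P Q hPu hQu
    have hBeq : B = (starRingEnd ℂ α) • (Qᴴ * Ad * Pᴴ) := mp_unique hB hB'
    subst hBeq
    have hXA : α • (P * X * Q) - α • (P * A * Q) = α • (P * (X - A) * Q) := by
      rw [← smul_sub]; congr 1; rw [Matrix.mul_sub, Matrix.sub_mul]
    have e1 : (α • (P * X * Q) - α • (P * A * Q)) * ((starRingEnd ℂ α) • (Qᴴ * Ad * Pᴴ))
        = P * ((X - A) * Ad) * Pᴴ := by
      rw [hXA, Matrix.smul_mul, Matrix.mul_smul, smul_smul, hαα, one_smul]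
      simp only [Matrix.mul_assoc, mul_cancel_left' hQu.2]
    have e2 : ((starRingEnd ℂ α) • (Qᴴ * Ad * Pᴴ)) * (α • (P * X * Q) - α • (P * A * Q))
        = Qᴴ * (Ad * (X - A)) * Q := by
      rw [hXA, Matrix.smul_mul, Matrix.mul_smul, smul_smul, hαα', one_smul]
      simp only [Matrix.mul_assoc, mul_cancel_left' hPu.1]
    unfold Jmis
    rw [e1, e2,
      frobSq_unit_right _ Pᴴ (by rw [Matrix.conjTranspose_conjTranspose]; exact hPu.1),
      frobSq_unit_left _ P hPu.1,
      frobSq_unit_right _ Q hQu.2,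
      frobSq_unit_left _ Qᴴ (by rw [Matrix.conjTranspose_conjTranspose]; exact hQu.2)]
  · intro P Q hP hQ B hB
    have hPu := complexPerm_unitary hP
    have hQu := complexPerm_unitary hQ
    have hB' := mp_transform (mp_conjTranspose hMP) α hα P Q hPu hQu
    have hBeq : B = (starRingEnd ℂ α) • (Qᴴ * Adᴴ * Pᴴ) := mp_unique hB hB'
    subst hBeq
    have hXA : α • (P * Xᴴ * Q) - α • (P * Aᴴ * Q) = α • (P * (X - A)ᴴ * Q) := by
      rw [← smul_sub]; congr 1
      rw [Matrix.conjTranspose_sub, Matrix.mul_sub, Matrix.sub_mul]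
    have e1 : (α • (P * Xᴴ * Q) - α • (P * Aᴴ * Q)) * ((starRingEnd ℂ α) • (Qᴴ * Adᴴ * Pᴴ))
        = P * ((X - A)ᴴ * Adᴴ) * Pᴴ := by
      rw [hXA, Matrix.smul_mul, Matrix.mul_smul, smul_smul, hαα, one_smul]
      simp only [Matrix.mul_assoc, mul_cancel_left' hQu.2]
    have e2 : ((starRingEnd ℂ α) • (Qᴴ * Adᴴ * Pᴴ)) * (α • (P * Xᴴ * Q) - α • (P * Aᴴ * Q))
        = Qᴴ * (Adᴴ * (X - A)ᴴ) * Q := by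
      rw [hXA, Matrix.smul_mul, Matrix.mul_smul, smul_smul, hαα', one_smul]
      simp only [Matrix.mul_assoc, mul_cancel_left' hPu.1]
    unfold Jmis
    rw [e1, e2,
      frobSq_unit_right _ Pᴴ (by rw [Matrix.conjTranspose_conjTranspose]; exact hPu.1),
      frobSq_unit_left _ P hPu.1,
      frobSq_unit_right _ Q hQu.2,
      frobSq_unit_left _ Qᴴ (by rw [Matrix.conjTranspose_conjTranspose]; exact hQu.2),
      ← Matrix.conjTranspose_mul, ← Matrix.conjTranspose_mul,
      frobSq_conjTranspose, frobSq_conjTranspose]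
    ring
  · intro P Q hP hQ B hB
    have hPu := complexPerm_unitary hP
    have hQu := complexPerm_unitary hQ
    have hB' := mp_transform (mp_transpose hMP) α hα P Q hPu hQu
    have hBeq : B = (starRingEnd ℂ α) • (Qᴴ * Adᵀ * Pᴴ) := mp_unique hB hB'
    subst hBeq
    have hXA : α • (P * Xᵀ * Q) - α • (P * Aᵀ * Q) = α • (P * (X - A)ᵀ * Q) := by
      rw [← smul_sub]; congr 1
      rw [Matrix.transpose_sub, Matrix.mul_sub, Matrix.sub_mul]
    have e1 : (α • (P * Xᵀ * Q) - α • (P * Aᵀ * Q)) * ((starRingEnd ℂ α) • (Qᴴ * Adᵀ * Pᴴ))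
        = P * ((X - A)ᵀ * Adᵀ) * Pᴴ := by
      rw [hXA, Matrix.smul_mul, Matrix.mul_smul, smul_smul, hαα, one_smul]
      simp only [Matrix.mul_assoc, mul_cancel_left' hQu.2]
    have e2 : ((starRingEnd ℂ α) • (Qᴴ * Adᵀ * Pᴴ)) * (α • (P * Xᵀ * Q) - α • (P * Aᵀ * Q))
        = Qᴴ * (Adᵀ * (X - A)ᵀ) * Q := by
      rw [hXA, Matrix.smul_mul, Matrix.mul_smul, smul_smul, hαα', one_smul]
      simp only [Matrix.mul_assoc, mul_cancel_left' hPu.1]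
    unfold Jmis
    rw [e1, e2,
      frobSq_unit_right _ Pᴴ (by rw [Matrix.conjTranspose_conjTranspose]; exact hPu.1),
      frobSq_unit_left _ P hPu.1,
      frobSq_unit_right _ Q hQu.2,
      frobSq_unit_left _ Qᴴ (by rw [Matrix.conjTranspose_conjTranspose]; exact hQu.2),
      ← Matrix.transpose_mul, ← Matrix.transpose_mul,
      frobSq_transpose, frobSq_transpose]
    ring
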